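/- Let d = (0 = d_0 < d_1 < ... < d_s) be a degree sequence, k = ⌊s/2⌋, and let j be an index with k ≤ j ≤ s−1. Let d' be defined by d'_j = d_j + 1 and d'_i = d_i for i ≠ j, and suppose d' is strictly increasing and d' ≤ (d')^{∨, d_s}. If either (a) s = 2k and j = k, or (b) j ≥ k+1 and d_j + 1 ≤ ⌈d_s/2⌉, then Ψ_{d'} · f_1(d̃') = Ψ_d · f_1(d̃). -/

import Mathlib

/-- `f₁(e) = Σ_{i=1}^s (e_i - i)`. -/
def f1 (s : ℕ) (e : ℕ → ℤ) : ℤ := ∑ i ∈ Finset.Icc 1 s, (e i - (i : ℤ))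

/-- The tilde sequence of a degree sequence `d` with `d_0 = 0`:
`d̃_i = min{d_s - d_{s-i}, ⌊d_s/2⌋}` for `1 ≤ i ≤ k = ⌊s/2⌋` and
`d̃_i = max{d_i, ⌈d_s/2⌉}` for `k+1 ≤ i ≤ s`. -/
def tilde (s : ℕ) (d : ℕ → ℤ) : ℕ → ℤ := fun i =>
  if i ≤ s / 2 then min (d s - d (s - i)) (d s / 2) else max (d i) ((d s + 1) / 2)

/-- `Ψ_d = Π_{i=1}^s d̃_i`. -/
def Psi (s : ℕ) (d : ℕ → ℤ) : ℤ := ∏ i ∈ Finset.Icc 1 s, tilde s d i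

/-- The sequence `d'` obtained from `d` by incrementing the `j`-th entry. -/
def upd (d : ℕ → ℤ) (j : ℕ) : ℕ → ℤ := Function.update d j (d j + 1)

/-- Let `0 = d_0 < d_1 < ⋯ < d_s` be a degree sequence,
`k = ⌊s/2⌋`, and `k ≤ j ≤ s - 1`.  Let `d'` be obtained from `d` by replacing
`d_j` by `d_j + 1`, and suppose `d'` is strictly increasing with
`d' ≤ (d')^{∨,d_s}`.  If either (a) `s = 2k` and `j = k`, or (b) `j ≥ k + 1`
and `d_j + 1 ≤ ⌈d_s/2⌉`, then `Ψ_{d'}·f₁(d̃') = Ψ_d·f₁(d̃)`.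
(Note `d'_s = d_s` since `j < s`; `(d s + 1)/2 = ⌈d_s/2⌉` as `d_s ≥ 0`.) -/
theorem stmt11 (s : ℕ) (hs : 1 ≤ s) (d : ℕ → ℤ)
    (hd : ∀ i < s, d i < d (i + 1)) (hd0 : d 0 = 0)
    (j : ℕ) (hjk : s / 2 ≤ j) (hjs : j + 1 ≤ s)
    (hd' : ∀ i < s, upd d j i < upd d j (i + 1))
    (hdual' : ∀ i ≤ s, upd d j i ≤ d s - upd d j (s - i))
    (hcase : (s = 2 * (s / 2) ∧ j = s / 2) ∨
      (s / 2 + 1 ≤ j ∧ d j + 1 ≤ (d s + 1) / 2)) :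
    Psi s (upd d j) * f1 s (tilde s (upd d j)) = Psi s d * f1 s (tilde s d) := by
  have key : ∀ i ∈ Finset.Icc 1 s, tilde s (upd d j) i = tilde s d i := by
    intro i hi
    simp only [Finset.mem_Icc] at hi
    unfold tilde upd
    rw [Function.update_of_ne (by omega : s ≠ j)]
    split
    · -- i ≤ s/2
      by_cases h : s - i = j
      · rw [h, Function.update_self]
        rcases hcase with ⟨ha, hb⟩ | ⟨hb1, hb2⟩
        · have h2 := hdual' j (by omega)
          rw [show s - j = j from by omega] at h2
          simp only [upd, Function.update_self] at h2
          rw [show j = s - i from h.symm] at h2 ⊢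
          rw [min_eq_right (by omega), min_eq_right (by omega)]
        · rw [show j = s - i from h.symm] at hb2 ⊢
          rw [min_eq_right (by omega), min_eq_right (by omega)]
      · rw [Function.update_of_ne h]
    · -- i > s/2
      by_cases h : i = j
      · subst h
        rw [Function.update_self]
        rcases hcase with ⟨ha, hb⟩ | ⟨hb1, hb2⟩
        · omega
        · rw [max_eq_right (by omega), max_eq_right (by omega)]
      · rw [Function.update_of_ne h]
  unfold Psi f1
  rw [Finset.prod_congr rfl key,
    Finset.sum_congr rfl (fun i hi => by rw [key i hi])]
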